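/- If v is obtained from w by deleting all positions not in a set S ⊆ dom(w) containing position 1, and S contains Pos_w(RK) for every ranker RK in a finite set R closed under taking ranker prefixes, then for every RK ∈ R with Pos_w(RK) ≠ ⊥, f(Pos_w(RK)) = Pos_v(RK), where f : S → dom(v) is the order-isomorphism mapping each surviving position of w to its position in v; moreover Pos_w(RK)=⊥ iff Pos_v(RK)=⊥. -/

import Mathlib

/-- Letter at 1-based position `i` of word `w`. -/
def letterAt {A : Type} (w : List A) (i : ℕ) : Option A := w[i - 1]?

variable {A : Type} [DecidableEq A]

/-- Least position `j` of `w` with `i < j` and `w[j] = a`. -/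
def findNext (w : List A) (a : A) (i : ℕ) : Option ℕ :=
  (List.range' 1 w.length).find? (fun j => decide (i < j ∧ letterAt w j = some a))

/-- Greatest position `j` of `w` with `j < i` and `w[j] = a`. -/
def findPrev (w : List A) (a : A) (i : ℕ) : Option ℕ :=
  ((List.range' 1 w.length).reverse).find? (fun j => decide (j < i ∧ letterAt w j = some a))

/-- Least position `j` of `w` with `i ≤ j` and `w[j] = a`. -/
def findNextW (w : List A) (a : A) (i : ℕ) : Option ℕ :=
  (List.range' 1 w.length).find? (fun j => decide (i ≤ j ∧ letterAt w j = some a))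

/-- Greatest position `j` of `w` with `j ≤ i` and `w[j] = a`. -/
def findPrevW (w : List A) (a : A) (i : ℕ) : Option ℕ :=
  ((List.range' 1 w.length).reverse).find? (fun j => decide (j ≤ i ∧ letterAt w j = some a))

/-- Ranker operators. -/
inductive ROp (A : Type) where
  | Xa (a : A) | Ya (a : A) | WXa (a : A) | WYa (a : A)
  | next | prev | SP | EP
deriving DecidableEq

/-- One deterministic search step from position `i`. -/
def rstep (w : List A) (i : ℕ) : ROp A → Option ℕ
  | .Xa a => findNext w a i
  | .Ya a => findPrev w a i
  | .WXa a => findNextW w a i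
  | .WYa a => findPrevW w a i
  | .next => if i + 1 ≤ w.length then some (i + 1) else none
  | .prev => if 2 ≤ i then some (i - 1) else none
  | .SP => some 1
  | .EP => if 1 ≤ w.length then some w.length else none

/-- A ranker is a list of operators applied left to right (ending in ⊤).
`Pos w i rk` is its unique end position (`none` = ⊥), starting at `i`. -/
def Pos (w : List A) (i : ℕ) (rk : List (ROp A)) : Option ℕ :=
  rk.foldlM (fun j op => rstep w j op) i

/-- Formulas of TL[X_a,Y_a]. -/
inductive TLF (A : Type) where
  | atom (a : A) | top
  | Xa (a : A) (φ : TLF A) | Ya (a : A) (φ : TLF A)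
  | WXa (a : A) (φ : TLF A) | WYa (a : A) (φ : TLF A)
  | next (φ : TLF A) | prev (φ : TLF A)
  | SP (φ : TLF A) | EP (φ : TLF A)
  | or (φ ψ : TLF A) | not (φ : TLF A)
deriving DecidableEq

/-- Semantics of TL[X_a,Y_a] over nonempty finite words, positions 1-based. -/
def Sat (w : List A) : ℕ → TLF A → Prop
  | i, .atom a => letterAt w i = some a
  | _, .top => True
  | i, .Xa a φ => ∃ j, i < j ∧ letterAt w j = some a ∧
      (∀ k, i < k → k < j → letterAt w k ≠ some a) ∧ Sat w j φ
  | i, .Ya a φ => ∃ j, j < i ∧ letterAt w j = some a ∧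
      (∀ k, j < k → k < i → letterAt w k ≠ some a) ∧ Sat w j φ
  | i, .WXa a φ => ∃ j, i ≤ j ∧ letterAt w j = some a ∧
      (∀ k, i ≤ k → k < j → letterAt w k ≠ some a) ∧ Sat w j φ
  | i, .WYa a φ => ∃ j, j ≤ i ∧ letterAt w j = some a ∧
      (∀ k, j < k → k ≤ i → letterAt w k ≠ some a) ∧ Sat w j φ
  | i, .next φ => i + 1 ≤ w.length ∧ Sat w (i + 1) φ
  | i, .prev φ => 2 ≤ i ∧ Sat w (i - 1) φ
  | _, .SP φ => Sat w 1 φ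
  | _, .EP φ => Sat w w.length φ
  | i, .or φ ψ => Sat w i φ ∨ Sat w i ψ
  | i, .not φ => ¬ Sat w i φ

/-- Size: number of operators and atomic formulas. -/
def TLF.size : TLF A → ℕ
  | .atom _ => 1 | .top => 1
  | .Xa _ φ => φ.size + 1 | .Ya _ φ => φ.size + 1
  | .WXa _ φ => φ.size + 1 | .WYa _ φ => φ.size + 1
  | .next φ => φ.size + 1 | .prev φ => φ.size + 1
  | .SP φ => φ.size + 1 | .EP φ => φ.size + 1
  | .or φ ψ => φ.size + ψ.size + 1 | .not φ => φ.size + 1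

/-- The subword of `w` keeping exactly the (1-based) positions in `S`. -/
def restrictPosF (w : List A) (S : Finset ℕ) : List A :=
  w.zipIdx.filterMap (fun p => if p.2 + 1 ∈ S then some p.1 else none)

/-- The order isomorphism from surviving positions of `w` onto positions of the
restricted word: a surviving position `p` is mapped to the number of surviving
positions `≤ p`. -/
def posMap (S : Finset ℕ) (p : ℕ) : ℕ := (S.filter (fun q => q ≤ p)).card

section Aux

lemma range'_getElem? {n i : ℕ} (h : i < n) : (List.range' 1 n)[i]? = some (i+1) := by
  rw [List.getElem?_range' h]; ring_nf

lemma find?_range'_some {P : ℕ → Bool} {n j : ℕ}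
    (h : (List.range' 1 n).find? P = some j) :
    1 ≤ j ∧ j ≤ n ∧ P j ∧ ∀ k, 1 ≤ k → k < j → ¬ P k := by
  rw [List.find?_eq_some_iff_append] at h
  obtain ⟨hPj, as, bs, heq, hnot⟩ := h
  have hjmem : j ∈ List.range' 1 n := by rw [heq]; simp
  have hj := List.mem_range'_1.1 hjmem
  have hlen : as.length < (List.range' 1 n).length := by
    rw [heq]; simp
  have hgetj : (List.range' 1 n)[as.length]? = some j := by
    rw [heq, List.getElem?_append_right le_rfl]; simp
  simp only [List.length_range'] at hlen
  rw [range'_getElem? (by omega)] at hgetj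
  have hgj : as.length + 1 = j := by simpa using hgetj
  have haslen : as.length = j - 1 := by omega
  refine ⟨hj.1, by omega, hPj, fun k hk1 hkj => ?_⟩
  have hkmem : (List.range' 1 n)[k-1]? = some k := by
    rw [range'_getElem? (by omega)]; congr 1; omega
  have : as[k-1]? = some k := by
    rw [heq, List.getElem?_append_left (by omega)] at hkmem; exact hkmem
  have hkas : k ∈ as := List.mem_iff_getElem?.2 ⟨_, this⟩
  simpa using hnot k hkas

lemma find?_range'_eq_some {P : ℕ → Bool} {n j : ℕ} :
    (List.range' 1 n).find? P = some j ↔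
    (1 ≤ j ∧ j ≤ n ∧ P j ∧ ∀ k, 1 ≤ k → k < j → ¬ P k) := by
  constructor
  · exact find?_range'_some
  · rintro ⟨h1, h2, h3, h4⟩
    cases hf : (List.range' 1 n).find? P with
    | none =>
      rw [List.find?_eq_none] at hf
      exact absurd h3 (hf j (List.mem_range'_1.2 ⟨h1, by omega⟩))
    | some j' =>
      obtain ⟨h1', h2', h3', h4'⟩ := find?_range'_some hf
      rcases lt_trichotomy j j' with h | h | h
      · exact absurd h3 (h4' j h1 h)
      · rw [h]
      · exact absurd h3' (h4 j' h1' h)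

lemma find?_range'_rev_some {P : ℕ → Bool} {n j : ℕ}
    (h : ((List.range' 1 n).reverse).find? P = some j) :
    1 ≤ j ∧ j ≤ n ∧ P j ∧ ∀ k, j < k → k ≤ n → ¬ P k := by
  rw [List.find?_eq_some_iff_append] at h
  obtain ⟨hPj, as, bs, heq, hnot⟩ := h
  have hjmem : j ∈ List.range' 1 n := by
    have : j ∈ (List.range' 1 n).reverse := by rw [heq]; simp
    simpa using this
  have hj := List.mem_range'_1.1 hjmem
  have hlen : as.length < ((List.range' 1 n).reverse).length := by rw [heq]; simp
  have hgetj : ((List.range' 1 n).reverse)[as.length]? = some j := by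
    rw [heq, List.getElem?_append_right le_rfl]; simp
  rw [List.getElem?_reverse (by simpa using hlen)] at hgetj
  simp only [List.length_reverse, List.length_range'] at hgetj hlen
  rw [range'_getElem? (by omega)] at hgetj
  have hgj : n - 1 - as.length + 1 = j := by simpa using hgetj
  have haslen : as.length = n - j := by omega
  refine ⟨hj.1, by omega, hPj, fun k hjk hkn => ?_⟩
  have hkmem : ((List.range' 1 n).reverse)[n-k]? = some k := by
    rw [List.getElem?_reverse (by simpa using (by omega : n - k < n)),
        List.length_range', range'_getElem? (by omega)]
    congr 1; omega
  have : as[n-k]? = some k := by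
    rw [heq, List.getElem?_append_left (by omega)] at hkmem; exact hkmem
  have hkas : k ∈ as := List.mem_iff_getElem?.2 ⟨_, this⟩
  simpa using hnot k hkas

lemma find?_range'_rev_eq_some {P : ℕ → Bool} {n j : ℕ} :
    ((List.range' 1 n).reverse).find? P = some j ↔
    (1 ≤ j ∧ j ≤ n ∧ P j ∧ ∀ k, j < k → k ≤ n → ¬ P k) := by
  constructor
  · exact find?_range'_rev_some
  · rintro ⟨h1, h2, h3, h4⟩
    cases hf : ((List.range' 1 n).reverse).find? P with
    | none =>
      rw [List.find?_eq_none] at hf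
      refine absurd h3 (hf j ?_)
      simp only [List.mem_reverse]
      exact List.mem_range'_1.2 ⟨h1, by omega⟩
    | some j' =>
      obtain ⟨h1', h2', h3', h4'⟩ := find?_range'_rev_some hf
      rcases lt_trichotomy j j' with h | h | h
      · exact absurd h3' (h4 j' h h2')
      · rw [h]
      · exact absurd h3 (h4' j h h2)


lemma enumFrom_filterMap_eq {A : Type} (w : List A) : ∀ (k : ℕ) (Q : ℕ → Bool),
    (w.zipIdx k).filterMap (fun p => if Q p.2 then some p.1 else none)
    = ((List.range w.length).filter (fun i => Q (k + i))).filterMap (fun i => w[i]?) := by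
  induction w with
  | nil => intro k Q; simp
  | cons a w ih =>
    intro k Q
    have hfil : ∀ l : List ℕ,
        (List.map Nat.succ l).filterMap (fun i => (a :: w)[i]?)
        = l.filterMap (fun i => w[i]?) := by
      intro l
      rw [List.filterMap_map]
      apply List.filterMap_congr
      intro i _
      simp [Function.comp]
    have htail : (List.filter (fun i => Q (k + i)) (List.map Nat.succ (List.range w.length))).filterMap
          (fun i => (a :: w)[i]?)
        = (w.zipIdx (k+1)).filterMap (fun p => if Q p.2 then some p.1 else none) := by
      rw [List.filter_map, hfil, ih (k+1) Q]
      congr 1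
      apply List.filter_congr
      intro i _
      have : k + 1 + i = k + Nat.succ i := by omega
      simp [Function.comp, this]
    rw [List.zipIdx_cons, List.length_cons, List.range_succ_eq_map]
    by_cases hQ : Q k
    · simp only [List.filterMap_cons, hQ, if_pos, List.filter_cons, Nat.add_zero, ite_true,
        decide_eq_true_eq]
      simp only [List.getElem?_cons_zero, htail]
    · simp only [List.filterMap_cons, hQ, List.filter_cons, Nat.add_zero]
      simp only [Bool.false_eq_true, if_false, ite_false, htail]



lemma filter_range_eq_sort_map (S : Finset ℕ) (n : ℕ)
    (hSdom : ∀ p ∈ S, 1 ≤ p ∧ p ≤ n) :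
    (List.range n).filter (fun i => decide (i + 1 ∈ S))
    = (S.sort (· ≤ ·)).map (· - 1) := by
  refine (fun hp h1 h2 => List.Perm.eq_of_pairwise' (r := (· ≤ ·)) h1 h2 hp) ?_ ?_ ?_
  · rw [List.perm_ext_iff_of_nodup]
    · intro i
      simp only [List.mem_filter, List.mem_range, List.mem_map, Finset.mem_sort,
        decide_eq_true_eq]
      constructor
      · rintro ⟨hi, hmem⟩; exact ⟨i+1, hmem, by omega⟩
      · rintro ⟨p, hp, rfl⟩
        have := hSdom p hp
        exact ⟨by omega, by rw [Nat.sub_add_cancel this.1]; exact hp⟩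
    · exact List.Nodup.filter _ (List.nodup_range (n := n))
    · apply List.Nodup.map_on _ (S.sort_nodup _)
      intro x hx y hy hxy
      have hx1 := (hSdom x (by simpa using hx)).1
      have hy1 := (hSdom y (by simpa using hy)).1
      omega
  · exact List.Pairwise.sublist List.filter_sublist (by
      simpa using List.pairwise_le_range (n := n))
  · rw [List.pairwise_map]
    exact (Finset.sortedLT_sort S).pairwise.imp (fun h => by omega)

lemma restrictPosF_eq_sort_filterMap (w : List A) (S : Finset ℕ)
    (hSdom : ∀ p ∈ S, 1 ≤ p ∧ p ≤ w.length) :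
    restrictPosF w S = (S.sort (· ≤ ·)).filterMap (fun p => w[p-1]?) := by
  have h0 : restrictPosF w S
      = (w.zipIdx 0).filterMap
          (fun p => if (fun i => decide (i + 1 ∈ S)) p.2 then some p.1 else none) := by
    simp [restrictPosF]
  have h1 := enumFrom_filterMap_eq w 0 (fun i => decide (i + 1 ∈ S))
  rw [h0, h1]
  have h2 : (List.filter (fun i => decide (0 + i + 1 ∈ S)) (List.range w.length))
      = (List.range w.length).filter (fun i => decide (i + 1 ∈ S)) := by
    apply List.filter_congr; intro i _; norm_num
  rw [h2, filter_range_eq_sort_map S w.length hSdom, List.filterMap_map]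
  rfl

lemma filterMap_getElem?_of_isSome {α β : Type*} (g : α → Option β) :
    ∀ (L : List α), (∀ x ∈ L, (g x).isSome) →
    ∀ i : ℕ, (L.filterMap g)[i]? = (L[i]?).bind g := by
  intro L
  induction L with
  | nil => intro _ i; simp
  | cons a T ih =>
    intro h i
    obtain ⟨b, hb⟩ := Option.isSome_iff_exists.1 (h a (by simp))
    rw [List.filterMap_cons, hb]
    cases i with
    | zero => simp [hb]
    | succ i => simpa using ih (fun x hx => h x (by simp [hx])) i

lemma filterMap_length_of_isSome {α β : Type*} (g : α → Option β) :
    ∀ (L : List α), (∀ x ∈ L, (g x).isSome) → (L.filterMap g).length = L.length := by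
  intro L
  induction L with
  | nil => intro _; simp
  | cons a T ih =>
    intro h
    obtain ⟨b, hb⟩ := Option.isSome_iff_exists.1 (h a (by simp))
    rw [List.filterMap_cons, hb, List.length_cons, List.length_cons,
      ih (fun x hx => h x (by simp [hx]))]

lemma sorted_getElem?_countP {L : List ℕ} (hs : List.Pairwise (· < ·) L) :
    ∀ p ∈ L, L[L.countP (· < p)]? = some p := by
  induction L with
  | nil => simp
  | cons a T ih =>
    intro p hp
    have hrest : ∀ b ∈ T, a < b := fun b hb => (List.pairwise_cons.1 hs).1 b hb
    rcases List.mem_cons.1 hp with rfl | hpT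
    · have : List.countP (· < p) (p :: T) = 0 := by
        rw [List.countP_cons_of_neg (by simp)]
        rw [List.countP_eq_zero]
        intro b hb
        have := hrest b hb
        simp only [decide_eq_true_eq]
        omega
      rw [this]; simp
    · have ha : a < p := hrest p hpT
      rw [List.countP_cons_of_pos (by simpa using ha)]
      simpa using ih (List.pairwise_cons.1 hs).2 p hpT

lemma countP_sort_eq_card_filter (S : Finset ℕ) (P : ℕ → Bool) :
    (S.sort (· ≤ ·)).countP P = (S.filter (fun q => P q)).card := by
  rw [List.Perm.countP_eq P (Finset.sort_perm_toList S _)]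
  have h1 := Multiset.coe_countP (fun q => P q = true) S.toList
  simp only [Finset.toList, Multiset.coe_toList, Bool.decide_eq_true] at h1
  rw [Finset.toList, ← h1, Multiset.countP_eq_card_filter]
  rfl

-- posMap lemmas
lemma posMap_mono (S : Finset ℕ) {p q : ℕ} (h : p ≤ q) : posMap S p ≤ posMap S q := by
  apply Finset.card_le_card
  intro x hx
  simp only [Finset.mem_filter] at hx ⊢
  exact ⟨hx.1, by omega⟩

lemma posMap_strict (S : Finset ℕ) {p q : ℕ} (hq : q ∈ S) (h : p < q) :
    posMap S p < posMap S q := by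
  apply Finset.card_lt_card
  constructor
  · intro x hx
    simp only [Finset.mem_filter] at hx ⊢
    exact ⟨hx.1, by omega⟩
  · intro hsub
    have : q ∈ S.filter (fun r => r ≤ p) := hsub (by simp [Finset.mem_filter, hq])
    simp only [Finset.mem_filter] at this; omega

lemma posMap_le_card (S : Finset ℕ) (p : ℕ) : posMap S p ≤ S.card :=
  Finset.card_le_card (Finset.filter_subset _ _)

lemma posMap_pos (S : Finset ℕ) {p : ℕ} (hp : p ∈ S) : 1 ≤ posMap S p := by
  have : p ∈ S.filter (fun q => q ≤ p) := by simp [Finset.mem_filter, hp]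
  have := Finset.card_pos.2 ⟨p, this⟩
  simpa [posMap] using this

lemma posMap_one (S : Finset ℕ) (hS1 : 1 ∈ S) (hge : ∀ p ∈ S, 1 ≤ p) :
    posMap S 1 = 1 := by
  have : S.filter (fun q => q ≤ 1) = {1} := by
    ext q
    simp only [Finset.mem_filter, Finset.mem_singleton]
    constructor
    · rintro ⟨hq, hle⟩; have := hge q hq; omega
    · rintro rfl; exact ⟨hS1, le_refl _⟩
  rw [posMap, this, Finset.card_singleton]

lemma posMap_top (S : Finset ℕ) (n : ℕ) (hle : ∀ p ∈ S, p ≤ n) :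
    posMap S n = S.card := by
  rw [posMap, Finset.filter_true_of_mem (fun p hp => hle p hp)]

lemma posMap_pred (S : Finset ℕ) {p : ℕ} (hp : p ∈ S) (h1 : 1 ≤ p) :
    posMap S p = posMap S (p - 1) + 1 := by
  have heq : S.filter (fun q => q ≤ p) = insert p (S.filter (fun q => q ≤ p - 1)) := by
    ext q
    simp only [Finset.mem_filter, Finset.mem_insert]
    constructor
    · rintro ⟨hq, hle⟩
      rcases Nat.eq_or_lt_of_le hle with rfl | hlt
      · exact Or.inl rfl
      · exact Or.inr ⟨hq, by omega⟩
    · rintro (rfl | ⟨hq, hle⟩)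
      · exact ⟨hp, le_refl _⟩
      · exact ⟨hq, by omega⟩
  rw [posMap, heq, Finset.card_insert_of_notMem (by
    simp only [Finset.mem_filter]; omega)]
  rfl

lemma posMap_lt_card_filter (S : Finset ℕ) {p : ℕ} (hp : p ∈ S) :
    posMap S p = (S.filter (fun q => q < p)).card + 1 := by
  have heq : S.filter (fun q => q ≤ p) = insert p (S.filter (fun q => q < p)) := by
    ext q
    simp only [Finset.mem_filter, Finset.mem_insert]
    constructor
    · rintro ⟨hq, hle⟩
      rcases Nat.eq_or_lt_of_le hle with rfl | hlt
      · exact Or.inl rfl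
      · exact Or.inr ⟨hq, hlt⟩
    · rintro (rfl | ⟨hq, hle⟩)
      · exact ⟨hp, le_refl _⟩
      · exact ⟨hq, le_of_lt hle⟩
  rw [posMap, heq, Finset.card_insert_of_notMem (by
    simp only [Finset.mem_filter]; omega)]

lemma posMap_surj (S : Finset ℕ) :
    ∀ j, 1 ≤ j → j ≤ S.card → ∃ q ∈ S, posMap S q = j := by
  intro j hj1 hj2
  have hinj : Set.InjOn (posMap S) ↑S := by
    intro x hx y hy hxy
    by_contra hne
    rcases lt_or_gt_of_ne hne with h | h
    · exact absurd hxy (Nat.ne_of_lt (posMap_strict S (by simpa using hy) h))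
    · exact absurd hxy.symm (Nat.ne_of_lt (posMap_strict S (by simpa using hx) h))
  have hsub : S.image (posMap S) ⊆ Finset.Icc 1 S.card := by
    intro j hj
    simp only [Finset.mem_image] at hj
    obtain ⟨q, hq, rfl⟩ := hj
    simp only [Finset.mem_Icc]
    exact ⟨posMap_pos S hq, posMap_le_card S q⟩
  have hcard : (S.image (posMap S)).card = (Finset.Icc 1 S.card).card := by
    rw [Finset.card_image_of_injOn hinj, Nat.card_Icc]
    omega
  have heq := Finset.eq_of_subset_of_card_le hsub (le_of_eq hcard.symm)
  have : j ∈ S.image (posMap S) := by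
    rw [heq]; simp only [Finset.mem_Icc]; exact ⟨hj1, hj2⟩
  simpa [Finset.mem_image] using this

lemma restrictPosF_length (w : List A) (S : Finset ℕ)
    (hSdom : ∀ p ∈ S, 1 ≤ p ∧ p ≤ w.length) :
    (restrictPosF w S).length = S.card := by
  rw [restrictPosF_eq_sort_filterMap w S hSdom,
    filterMap_length_of_isSome _ _ (fun x hx => ?_), Finset.length_sort]
  have hx' := hSdom x (Finset.mem_sort (α := ℕ) (· ≤ ·) |>.1 hx)
  rw [List.getElem?_eq_getElem (by omega)]
  rfl

lemma letterAt_restrict (w : List A) (S : Finset ℕ)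
    (hSdom : ∀ p ∈ S, 1 ≤ p ∧ p ≤ w.length) {p : ℕ} (hp : p ∈ S) :
    letterAt (restrictPosF w S) (posMap S p) = letterAt w p := by
  have hsome : ∀ x ∈ S.sort (· ≤ ·), ((fun q => w[q-1]?) x).isSome := by
    intro x hx
    have hx' := hSdom x (Finset.mem_sort (α := ℕ) (· ≤ ·) |>.1 hx)
    have hlt : x - 1 < w.length := by omega
    simp only [List.getElem?_eq_getElem hlt]
    rfl
  have hcount : (S.sort (· ≤ ·)).countP (fun q => decide (q < p)) = posMap S p - 1 := by
    rw [countP_sort_eq_card_filter]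
    have h1 := posMap_lt_card_filter S hp
    have h2 : S.filter (fun q => decide (q < p) = true) = S.filter (fun q => q < p) := by
      apply Finset.filter_congr; intro x _; simp
    rw [h2]
    omega
  have hL : (S.sort (· ≤ ·))[posMap S p - 1]? = some p := by
    have := sorted_getElem?_countP (Finset.sortedLT_sort S).pairwise p
      (Finset.mem_sort (α := ℕ) (· ≤ ·) |>.2 hp)
    rwa [hcount] at this
  rw [letterAt, letterAt, restrictPosF_eq_sort_filterMap w S hSdom,
    filterMap_getElem?_of_isSome _ _ hsome, hL, Option.bind_some]

lemma Pos_append (w : List A) (i : ℕ) (l : List (ROp A)) (op : ROp A) :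
    Pos w i (l ++ [op]) = (Pos w i l).bind (fun j => rstep w j op) := by
  simp only [Pos, List.foldlM_append]
  cases List.foldlM (fun j op => rstep w j op) i l with
  | none => rfl
  | some j => simp

lemma rstep_restrict (w : List A) (S : Finset ℕ)
    (hS1 : (1 : ℕ) ∈ S) (hSdom : ∀ p ∈ S, 1 ≤ p ∧ p ≤ w.length)
    {p : ℕ} (hp : p ∈ S) (op : ROp A) :
    (∀ q, rstep w p op = some q → q ∈ S →
      rstep (restrictPosF w S) (posMap S p) op = some (posMap S q)) ∧
    (rstep w p op = none → rstep (restrictPosF w S) (posMap S p) op = none) := by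
  have hvlen : (restrictPosF w S).length = S.card := restrictPosF_length w S hSdom
  have hmpos : 1 ≤ S.card := Finset.card_pos.2 ⟨1, hS1⟩
  have hge1 : ∀ q ∈ S, 1 ≤ q := fun q hq => (hSdom q hq).1
  have hlen : ∀ q ∈ S, q ≤ w.length := fun q hq => (hSdom q hq).2
  have hn1 : 1 ≤ w.length := le_trans (hge1 p hp) (hlen p hp)
  cases op with
  | SP =>
    constructor
    · intro q hq _
      have : q = 1 := by simpa [rstep] using hq.symm
      subst this
      simp [rstep, posMap_one S hS1 hge1]
    · intro h; simp [rstep] at h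
  | EP =>
    constructor
    · intro q hq _
      rw [rstep, if_pos hn1] at hq
      obtain rfl : w.length = q := by simpa using hq
      rw [rstep, if_pos (by omega : 1 ≤ (restrictPosF w S).length), hvlen,
        posMap_top S w.length hlen]
    · intro h
      rw [rstep, if_pos hn1] at h
      cases h
  | next =>
    constructor
    · intro q hq hqS
      rw [rstep] at hq
      by_cases hc : p + 1 ≤ w.length
      swap
      · rw [if_neg hc] at hq; cases hq
      rw [if_pos hc] at hq
      obtain rfl : p + 1 = q := by simpa using hq
      have hfq : posMap S (p + 1) = posMap S p + 1 := by
        have := posMap_pred S hqS (by omega)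
        simpa using this
      rw [rstep, if_pos (by rw [hvlen]; have := posMap_le_card S (p+1); omega), hfq]
    · intro h
      rw [rstep] at h
      split_ifs at h with hc
      have hpn : p = w.length := by have := hlen p hp; omega
      rw [rstep, if_neg]
      rw [hvlen, hpn, posMap_top S w.length hlen]
      omega
  | prev =>
    constructor
    · intro q hq hqS
      rw [rstep] at hq
      by_cases hc : 2 ≤ p
      swap
      · rw [if_neg hc] at hq; cases hq
      rw [if_pos hc] at hq
      obtain rfl : p - 1 = q := by simpa using hq
      have hfp : posMap S p = posMap S (p - 1) + 1 := posMap_pred S hp (by omega)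
      have hq1 : 1 ≤ posMap S (p - 1) := posMap_pos S hqS
      rw [rstep, if_pos (by omega), hfp]
      simp
    · intro h
      rw [rstep] at h
      split_ifs at h with hc
      have hp1 : p = 1 := by have := hge1 p hp; omega
      rw [rstep, if_neg]
      rw [hp1, posMap_one S hS1 hge1]
      omega
  | Xa a =>
    constructor
    · intro q hq hqS
      rw [rstep, findNext] at hq
      obtain ⟨hq1, hq2, hq3, hq4⟩ := find?_range'_some hq
      simp only [decide_eq_true_eq] at hq3
      rw [rstep, findNext, find?_range'_eq_some]
      refine ⟨posMap_pos S hqS, by rw [hvlen]; exact posMap_le_card S q, ?_, ?_⟩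
      · simp only [decide_eq_true_eq]
        exact ⟨posMap_strict S hqS hq3.1, by
          rw [letterAt_restrict w S hSdom hqS]; exact hq3.2⟩
      · intro k hk1 hk2
        simp only [decide_eq_true_eq]
        rintro ⟨hfk, hka⟩
        obtain ⟨r, hrS, rfl⟩ := posMap_surj S k hk1
          (le_trans (le_of_lt hk2) (posMap_le_card S q))
        have hpr : p < r := by
          by_contra hc
          exact absurd hfk (not_lt.2 (posMap_mono S (not_lt.1 hc)))
        have hrq : r < q := by
          by_contra hc
          exact absurd hk2 (not_lt.2 (posMap_mono S (not_lt.1 hc)))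
        rw [letterAt_restrict w S hSdom hrS] at hka
        have hcon := hq4 r (hge1 r hrS) hrq
        simp only [decide_eq_true_eq] at hcon
        exact hcon ⟨hpr, hka⟩
    · intro h
      rw [rstep, findNext] at h
      rw [List.find?_eq_none] at h
      rw [rstep, findNext, List.find?_eq_none]
      intro k hk
      rw [List.mem_range'_1] at hk
      simp only [decide_eq_true_eq]
      rintro ⟨hfk, hka⟩
      rw [hvlen] at hk
      obtain ⟨r, hrS, rfl⟩ := posMap_surj S k hk.1 (by omega)
      have hpr : p < r := by
        by_contra hc
        exact absurd hfk (not_lt.2 (posMap_mono S (not_lt.1 hc)))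
      rw [letterAt_restrict w S hSdom hrS] at hka
      have hrmem : r ∈ List.range' 1 w.length :=
        List.mem_range'_1.2 ⟨hge1 r hrS, by have := hlen r hrS; omega⟩
      have hcon := h r hrmem
      simp only [decide_eq_true_eq] at hcon
      exact hcon ⟨hpr, hka⟩
  | WXa a =>
    constructor
    · intro q hq hqS
      rw [rstep, findNextW] at hq
      obtain ⟨hq1, hq2, hq3, hq4⟩ := find?_range'_some hq
      simp only [decide_eq_true_eq] at hq3
      rw [rstep, findNextW, find?_range'_eq_some]
      refine ⟨posMap_pos S hqS, by rw [hvlen]; exact posMap_le_card S q, ?_, ?_⟩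
      · simp only [decide_eq_true_eq]
        exact ⟨posMap_mono S hq3.1, by
          rw [letterAt_restrict w S hSdom hqS]; exact hq3.2⟩
      · intro k hk1 hk2
        simp only [decide_eq_true_eq]
        rintro ⟨hfk, hka⟩
        obtain ⟨r, hrS, rfl⟩ := posMap_surj S k hk1
          (le_trans (le_of_lt hk2) (posMap_le_card S q))
        have hpr : p ≤ r := by
          by_contra hc
          exact absurd hfk (not_le.2 (posMap_strict S hp (not_le.1 hc)))
        have hrq : r < q := by
          by_contra hc
          exact absurd hk2 (not_lt.2 (posMap_mono S (not_lt.1 hc)))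
        rw [letterAt_restrict w S hSdom hrS] at hka
        have hcon := hq4 r (hge1 r hrS) hrq
        simp only [decide_eq_true_eq] at hcon
        exact hcon ⟨hpr, hka⟩
    · intro h
      rw [rstep, findNextW] at h
      rw [List.find?_eq_none] at h
      rw [rstep, findNextW, List.find?_eq_none]
      intro k hk
      rw [List.mem_range'_1] at hk
      simp only [decide_eq_true_eq]
      rintro ⟨hfk, hka⟩
      rw [hvlen] at hk
      obtain ⟨r, hrS, rfl⟩ := posMap_surj S k hk.1 (by omega)
      have hpr : p ≤ r := by
        by_contra hc
        exact absurd hfk (not_le.2 (posMap_strict S hp (not_le.1 hc)))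
      rw [letterAt_restrict w S hSdom hrS] at hka
      have hrmem : r ∈ List.range' 1 w.length :=
        List.mem_range'_1.2 ⟨hge1 r hrS, by have := hlen r hrS; omega⟩
      have hcon := h r hrmem
      simp only [decide_eq_true_eq] at hcon
      exact hcon ⟨hpr, hka⟩
  | Ya a =>
    constructor
    · intro q hq hqS
      rw [rstep, findPrev] at hq
      obtain ⟨hq1, hq2, hq3, hq4⟩ := find?_range'_rev_some hq
      simp only [decide_eq_true_eq] at hq3
      rw [rstep, findPrev, find?_range'_rev_eq_some]
      refine ⟨posMap_pos S hqS, by rw [hvlen]; exact posMap_le_card S q, ?_, ?_⟩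
      · simp only [decide_eq_true_eq]
        exact ⟨posMap_strict S hp hq3.1, by
          rw [letterAt_restrict w S hSdom hqS]; exact hq3.2⟩
      · intro k hk1 hk2
        simp only [decide_eq_true_eq]
        rintro ⟨hfk, hka⟩
        rw [hvlen] at hk2
        have hk0 : 1 ≤ k := le_trans (posMap_pos S hqS) (le_of_lt hk1)
        obtain ⟨r, hrS, rfl⟩ := posMap_surj S k hk0 hk2
        have hqr : q < r := by
          by_contra hc
          exact absurd hk1 (not_lt.2 (posMap_mono S (not_lt.1 hc)))
        have hrp : r < p := by
          by_contra hc
          exact absurd hfk (not_lt.2 (posMap_mono S (not_lt.1 hc)))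
        rw [letterAt_restrict w S hSdom hrS] at hka
        have hcon := hq4 r hqr (hlen r hrS)
        simp only [decide_eq_true_eq] at hcon
        exact hcon ⟨hrp, hka⟩
    · intro h
      rw [rstep, findPrev] at h
      rw [List.find?_eq_none] at h
      rw [rstep, findPrev, List.find?_eq_none]
      intro k hk
      rw [List.mem_reverse, List.mem_range'_1] at hk
      simp only [decide_eq_true_eq]
      rintro ⟨hfk, hka⟩
      rw [hvlen] at hk
      obtain ⟨r, hrS, rfl⟩ := posMap_surj S k hk.1 (by omega)
      have hrp : r < p := by
        by_contra hc
        exact absurd hfk (not_lt.2 (posMap_mono S (not_lt.1 hc)))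
      rw [letterAt_restrict w S hSdom hrS] at hka
      have hrmem : r ∈ (List.range' 1 w.length).reverse := by
        rw [List.mem_reverse]
        exact List.mem_range'_1.2 ⟨hge1 r hrS, by have := hlen r hrS; omega⟩
      have hcon := h r hrmem
      simp only [decide_eq_true_eq] at hcon
      exact hcon ⟨hrp, hka⟩
  | WYa a =>
    constructor
    · intro q hq hqS
      rw [rstep, findPrevW] at hq
      obtain ⟨hq1, hq2, hq3, hq4⟩ := find?_range'_rev_some hq
      simp only [decide_eq_true_eq] at hq3
      rw [rstep, findPrevW, find?_range'_rev_eq_some]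
      refine ⟨posMap_pos S hqS, by rw [hvlen]; exact posMap_le_card S q, ?_, ?_⟩
      · simp only [decide_eq_true_eq]
        exact ⟨posMap_mono S hq3.1, by
          rw [letterAt_restrict w S hSdom hqS]; exact hq3.2⟩
      · intro k hk1 hk2
        simp only [decide_eq_true_eq]
        rintro ⟨hfk, hka⟩
        rw [hvlen] at hk2  -- unused maybe
        have hk0 : 1 ≤ k := le_trans (posMap_pos S hqS) (le_of_lt hk1)
        obtain ⟨r, hrS, rfl⟩ := posMap_surj S k hk0
          (le_trans hfk (posMap_le_card S p))
        have hqr : q < r := by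
          by_contra hc
          exact absurd hk1 (not_lt.2 (posMap_mono S (not_lt.1 hc)))
        have hrp : r ≤ p := by
          by_contra hc
          exact absurd hfk (not_le.2 (posMap_strict S hrS (not_le.1 hc)))
        rw [letterAt_restrict w S hSdom hrS] at hka
        have hcon := hq4 r hqr (hlen r hrS)
        simp only [decide_eq_true_eq] at hcon
        exact hcon ⟨hrp, hka⟩
    · intro h
      rw [rstep, findPrevW] at h
      rw [List.find?_eq_none] at h
      rw [rstep, findPrevW, List.find?_eq_none]
      intro k hk
      rw [List.mem_reverse, List.mem_range'_1] at hk
      simp only [decide_eq_true_eq]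
      rintro ⟨hfk, hka⟩
      rw [hvlen] at hk
      obtain ⟨r, hrS, rfl⟩ := posMap_surj S k hk.1 (by omega)
      have hrp : r ≤ p := by
        by_contra hc
        exact absurd hfk (not_le.2 (posMap_strict S hrS (not_le.1 hc)))
      rw [letterAt_restrict w S hSdom hrS] at hka
      have hrmem : r ∈ (List.range' 1 w.length).reverse := by
        rw [List.mem_reverse]
        exact List.mem_range'_1.2 ⟨hge1 r hrS, by have := hlen r hrS; omega⟩
      have hcon := h r hrmem
      simp only [decide_eq_true_eq] at hcon
      exact hcon ⟨hrp, hka⟩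

end Aux

/-- If `v` is obtained from `w` by deleting all positions not in
`S ⊆ dom(w)` with `1 ∈ S`, and `S` contains `Pos_w(RK)` for every ranker `RK` in a
finite, prefix-closed set `R`, then for every `RK ∈ R`: if `Pos_w(RK) = p ≠ ⊥` then
`Pos_v(RK) = f(p)` where `f` is the order isomorphism of `S` onto `dom(v)`;
moreover `Pos_w(RK) = ⊥` iff `Pos_v(RK) = ⊥`. -/
theorem deletion_preserves_ranker_positions
    (w : List A) (S : Finset ℕ) (R : Finset (List (ROp A)))
    (hS1 : (1 : ℕ) ∈ S) (hSdom : ∀ p ∈ S, 1 ≤ p ∧ p ≤ w.length)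
    (hclosed : ∀ (rk : List (ROp A)) (op : ROp A), rk ++ [op] ∈ R → rk ∈ R)
    (hpos : ∀ rk ∈ R, ∀ p, Pos w 1 rk = some p → p ∈ S) :
    ∀ rk ∈ R,
      (∀ p, Pos w 1 rk = some p →
        Pos (restrictPosF w S) 1 rk = some (posMap S p)) ∧
      (Pos w 1 rk = none ↔ Pos (restrictPosF w S) 1 rk = none) := by
  intro rk
  induction rk using List.reverseRecOn with
  | nil =>
    intro _
    constructor
    · intro p hp
      have : (1 : ℕ) = p := by simpa [Pos] using hp
      subst this
      simp [Pos, posMap_one S hS1 (fun p hp => (hSdom p hp).1)]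
    · simp [Pos]
  | append_singleton l op ih =>
    intro hmem
    have hl : l ∈ R := hclosed l op hmem
    obtain ⟨ih1, ih2⟩ := ih hl
    rw [Pos_append, Pos_append]
    cases hPl : Pos w 1 l with
    | none =>
      rw [ih2.1 hPl]
      simp
    | some p =>
      have hpS : p ∈ S := hpos l hl p hPl
      rw [ih1 p hPl, Option.bind_some, Option.bind_some]
      obtain ⟨st1, st2⟩ := rstep_restrict w S hS1 hSdom hpS op
      constructor
      · intro q hq
        exact st1 q hq (hpos (l ++ [op]) hmem q (by
          rw [Pos_append, hPl, Option.bind_some]; exact hq))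
      · constructor
        · exact st2
        · intro hvnone
          cases hrw : rstep w p op with
          | none => rfl
          | some q =>
            have hqS : q ∈ S := hpos (l ++ [op]) hmem q (by
              rw [Pos_append, hPl, Option.bind_some]; exact hrw)
            rw [st1 q hrw hqS] at hvnone
            cases hvnone
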